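/- For all positive integers m and n, the following identity of rational numbers holds: Σ_{k=1−n}^{n} (−1)^k / (2n−2k+1) · C(k, m) · binom(4n−1, 2n+2k−1) = Σ_{k=1}^{n} Σ_{j=1−k}^{k} 4^(n−k) (−1)^j / (2n−2k+1) · C(j, m) · binom(2n−1, 2k−1) · binom(2k−1, k−j). (In the paper the outer sum on the right runs over all k ≥ 1, but binom(2n−1, 2k−1) = 0 for k > n, so it truncates at k = n.) -/

import Mathlib

/-- The generalized binomial coefficient `C(x, m) = x(x−1)⋯(x−m+1)/m!` for an
integer `x` (possibly negative or less than `m`) and a natural number `m`. -/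
def genChoose (x : ℤ) (m : ℕ) : ℚ :=
  (∏ i ∈ Finset.range m, ((x : ℚ) - i)) / Nat.factorial m

section Helpers
open Polynomial

lemma coeffsq (M s : ℕ) : ((X^2 + 1 : ℚ[X])^M).coeff s
    = if Even s then (M.choose (s/2) : ℚ) else 0 := by
  rw [add_pow, finset_sum_coeff]
  have h1 : ∀ i ∈ Finset.range (M+1), ((X^2:ℚ[X])^i * 1^(M-i) * (M.choose i : ℚ[X])).coeff s
      = (M.choose i : ℚ) * (if s = 2*i then 1 else 0) := by
    intro i _
    rw [one_pow, mul_one, ← pow_mul, mul_comm]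
    simp [coeff_natCast_mul, coeff_X_pow]
  rw [Finset.sum_congr rfl h1]
  by_cases hs : Even s
  · obtain ⟨t, ht⟩ := hs
    subst ht
    have hs : Even (t+t) := ⟨t, rfl⟩
    have hd : (t+t)/2 = t := by omega
    have h2 : ∀ i, (t+t = 2*i) ↔ (i = (t+t)/2) := by intro i; omega
    simp only [h2, mul_ite, mul_one, mul_zero]
    rw [Finset.sum_ite_eq' (Finset.range (M+1)) ((t+t)/2) (fun i => (M.choose i : ℚ))]
    by_cases htM : (t+t)/2 ∈ Finset.range (M+1)
    · simp [htM, hs]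
    · rw [if_neg htM, if_pos hs, Nat.choose_eq_zero_of_lt (by simpa using htM), Nat.cast_zero]
  · simp only [hs, if_false]
    apply Finset.sum_eq_zero
    intro i _
    have : ¬ (s = 2*i) := by rintro rfl; exact hs ⟨i, by ring⟩
    simp [this]

lemma lemA (n q : ℕ) : ((4*n).choose (2*n+2*q+1) : ℚ)
    = ∑ b ∈ Finset.range (2*n+1), ((2*n).choose b : ℚ) * 2^b *
        (if Even (2*n+2*q+1-b) then (((2*n-b).choose ((2*n+2*q+1-b)/2)):ℚ) else 0) := by
  have key : ((X+1:ℚ[X])^(4*n)) = ∑ b ∈ Finset.range (2*n+1),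
      (C 2 * X)^b * (X^2+1)^(2*n-b) * ((2*n).choose b : ℚ[X]) := by
    rw [← add_pow, show (4*n) = 2*(2*n) by ring, pow_mul]
    congr 1
    simp only [map_ofNat]
    ring
  have h := congrArg (fun p : ℚ[X] => p.coeff (2*n+2*q+1)) key
  simp only [coeff_X_add_one_pow, finset_sum_coeff] at h
  rw [h]
  apply Finset.sum_congr rfl
  intro b hb
  have hbr : b ≤ 2*n := by simpa [Nat.lt_succ_iff] using hb
  have hterm : ((C 2 * X)^b * ((X:ℚ[X])^2+1)^(2*n-b) * ((2*n).choose b : ℚ[X]))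
      = ((2*n).choose b : ℚ[X]) * (C ((2:ℚ)^b) * (X^b * (X^2+1)^(2*n-b))) := by
    rw [mul_pow, ← C_pow]; ring
  rw [hterm, coeff_natCast_mul, coeff_C_mul,
    show 2*n+2*q+1 = (2*n+2*q+1-b) + b by omega, coeff_X_pow_mul, coeffsq]
  simp only [Nat.add_sub_cancel]
  ring

lemma sum_odd_aux (g : ℕ → ℚ) (h : ∀ b, Even b → g b = 0) :
    ∀ n : ℕ, ∑ b ∈ Finset.range (2*n+1), g b = ∑ k ∈ Finset.range n, g (2*k+1) := by
  intro n
  induction n with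
  | zero => simpa using h 0 Even.zero
  | succ n ih =>
    rw [show 2*(n+1)+1 = (2*n+1)+1+1 by ring, Finset.sum_range_succ, Finset.sum_range_succ, ih,
      Finset.sum_range_succ, h (2*n+1+1) (by exact ⟨n+1, by ring⟩)]
    ring

lemma lemG (n q : ℕ) (hq : q < n) :
    2 * ∑ k ∈ Finset.Icc (q+1) n,
        (4:ℚ)^(n-k) * ((2*n).choose (2*k-1) : ℚ) * ((2*k-1).choose (k-1-q) : ℚ)
      = ((4*n).choose (2*n+2*q+1) : ℚ) := by
  rw [lemA]
  set g : ℕ → ℚ := fun b => ((2*n).choose b : ℚ) * 2^b *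
      (if Even (2*n+2*q+1-b) then (((2*n-b).choose ((2*n+2*q+1-b)/2)):ℚ) else 0) with hg
  have hzero : ∀ b, Even b → g b = 0 := by
    intro b hb
    obtain ⟨c, rfl⟩ := hb
    have hb : Even (c+c) := ⟨c, rfl⟩
    rcases le_or_gt (c+c) (2*n) with hble | hbgt
    · have : ¬ Even (2*n+2*q+1-(c+c)) := by
        rw [Nat.even_sub (by omega), Nat.even_iff, Nat.even_iff]
        omega
      simp [hg, this]
    · have : (2*n).choose (c+c) = 0 := Nat.choose_eq_zero_of_lt (by omega)
      simp [hg, this]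
  rw [sum_odd_aux g hzero n]
  have hterm : ∀ k ∈ Finset.range n, g (2*k+1)
      = ((2*n).choose (2*k+1) : ℚ) * 2^(2*k+1) * ((2*n-2*k-1).choose (n+q-k) : ℚ) := by
    intro k hk
    have hk' : k < n := Finset.mem_range.mp hk
    have he : Even (2*n+2*q+1-(2*k+1)) := by
      rw [Nat.even_sub (by omega), Nat.even_iff, Nat.even_iff]
      omega
    have h1 : (2*n+2*q+1-(2*k+1))/2 = n+q-k := by omega
    have h2 : 2*n-(2*k+1) = 2*n-2*k-1 := by omega
    simp only [hg, he, if_pos, h1, h2]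
  rw [Finset.sum_congr rfl hterm, ← Finset.sum_range_reflect]
  have hterm2 : ∀ k ∈ Finset.range n,
      ((2*n).choose (2*(n-1-k)+1) : ℚ) * 2^(2*(n-1-k)+1) * ((2*n-2*(n-1-k)-1).choose (n+q-(n-1-k)) : ℚ)
      = ((2*n).choose (2*k+1) : ℚ) * 2^(2*n-2*k-1) * ((2*k+1).choose (q+k+1) : ℚ) := by
    intro k hk
    have hk' : k < n := Finset.mem_range.mp hk
    have h1 : 2*(n-1-k)+1 = 2*n-(2*k+1) := by omega
    have h2 : 2*n-2*(n-1-k)-1 = 2*k+1 := by omega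
    have h3 : n+q-(n-1-k) = q+k+1 := by omega
    have h4 : 2*(n-1-k)+1 = 2*n-2*k-1 := by omega
    rw [h2, h3, h4, show 2*n-2*k-1 = 2*n-(2*k+1) by omega, Nat.choose_symm (by omega)]
  rw [Finset.sum_congr rfl hterm2]
  -- now RHS-sum = ∑ k in range n, h3 k; restrict to Ico q n
  have hsub : ∑ k ∈ Finset.range n, ((2*n).choose (2*k+1) : ℚ) * 2^(2*n-2*k-1) * ((2*k+1).choose (q+k+1) : ℚ)
      = ∑ k ∈ Finset.Ico q n, ((2*n).choose (2*k+1) : ℚ) * 2^(2*n-2*k-1) * ((2*k+1).choose (q+k+1) : ℚ) := by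
    rw [eq_comm]
    apply Finset.sum_subset
    · intro x hx
      simp only [Finset.mem_Ico] at hx
      exact Finset.mem_range.mpr hx.2
    · intro x hx hnx
      simp only [Finset.mem_range] at hx
      simp only [Finset.mem_Ico] at hnx
      rw [Nat.choose_eq_zero_of_lt (show 2*x+1 < q+x+1 by omega)]
      simp
  rw [hsub, Finset.sum_Ico_eq_sum_range]
  rw [show Finset.Icc (q+1) n = Finset.Ico (q+1) (n+1) by rw [Finset.Ico_add_one_right_eq_Icc],
    Finset.sum_Ico_eq_sum_range, Finset.mul_sum]
  rw [show n+1-(q+1) = n-q by omega]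
  apply Finset.sum_congr rfl
  intro i hi
  have hi' : i < n - q := Finset.mem_range.mp hi
  have e1 : 2*(q+1+i)-1 = 2*(q+i)+1 := by omega
  have e2 : q+1+i-1-q = i := by omega
  rw [e1, e2, show q+(q+i)+1 = (2*(q+i)+1) - i by omega, Nat.choose_symm (by omega)]
  rw [show (4:ℚ) = 2^2 by norm_num, ← pow_mul]
  rw [show 2*n-2*(q+i)-1 = 2*(n-(q+1+i))+1 by omega, pow_succ]
  ring

lemma absorb (N r : ℕ) (hr : r ≤ N) : (N+1) * N.choose r = (N+1).choose r * (N+1-r) := by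
  have h := Nat.add_one_mul_choose_eq N (N - r)
  rw [Nat.choose_symm hr] at h
  rw [h, show N-r+1 = (N+1)-r by omega, Nat.choose_symm (by omega)]

lemma Tpos (n q : ℕ) (hq : q < n) :
    ∑ k ∈ Finset.Icc (q+1) n, (4:ℚ)^(n-k)/(2*(n:ℚ)-2*(k:ℚ)+1) *
        ((2*n-1).choose (2*k-1):ℚ) * ((2*k-1).choose (k-1-q):ℚ)
      = ((4*n-1).choose (2*n+2*q+1):ℚ) / (2*(n:ℚ)-2*(q:ℚ)-1) := by
  have hn1 : (1:ℚ) ≤ (n:ℚ) := by exact_mod_cast (show 1 ≤ n by omega)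
  have hqn : (q:ℚ) ≤ (n:ℚ) - 1 := by
    have : (q:ℚ) + 1 ≤ n := by exact_mod_cast (show q+1 ≤ n by omega)
    linarith
  have h2n : (2*(n:ℚ)) ≠ 0 := by linarith
  have hD' : (2*(n:ℚ)-2*(q:ℚ)-1) ≠ 0 := by
    have : (0:ℚ) < 2*(n:ℚ)-2*(q:ℚ)-1 := by linarith
    linarith
  have step1 : ∀ k ∈ Finset.Icc (q+1) n,
      (4:ℚ)^(n-k)/(2*(n:ℚ)-2*(k:ℚ)+1) * ((2*n-1).choose (2*k-1):ℚ) * ((2*k-1).choose (k-1-q):ℚ)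
      = (4:ℚ)^(n-k) * ((2*n).choose (2*k-1):ℚ) * ((2*k-1).choose (k-1-q):ℚ) / (2*(n:ℚ)) := by
    intro k hk
    rw [Finset.mem_Icc] at hk
    have habs := absorb (2*n-1) (2*k-1) (by omega)
    rw [show 2*n-1+1 = 2*n by omega] at habs
    have hcast : ((2*n - (2*k-1):ℕ):ℚ) = 2*(n:ℚ)-2*(k:ℚ)+1 := by
      rw [Nat.cast_sub (by omega), Nat.cast_sub (by omega)]
      push_cast
      ring
    have habsQ := congrArg (Nat.cast : ℕ → ℚ) habs
    push_cast [-Nat.cast_sub] at habsQ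
    rw [hcast] at habsQ
    have hkq : (k:ℚ) ≤ (n:ℚ) := by exact_mod_cast hk.2
    have hD : (2*(n:ℚ)-2*(k:ℚ)+1) ≠ 0 := by
      have : (0:ℚ) < 2*(n:ℚ)-2*(k:ℚ)+1 := by linarith
      linarith
    rw [div_mul_eq_mul_div, div_mul_eq_mul_div, div_eq_div_iff hD h2n]
    linear_combination ((4:ℚ)^(n-k) * ((2*k-1).choose (k-1-q):ℚ)) * habsQ
  rw [Finset.sum_congr rfl step1, ← Finset.sum_div]
  have hG := lemG n q hq
  have habs4 := absorb (4*n-1) (2*n+2*q+1) (by omega)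
  rw [show 4*n-1+1 = 4*n by omega] at habs4
  have hcast4 : ((4*n - (2*n+2*q+1):ℕ):ℚ) = 2*(n:ℚ)-2*(q:ℚ)-1 := by
    rw [Nat.cast_sub (by omega)]
    push_cast
    ring
  have habs4Q := congrArg (Nat.cast : ℕ → ℚ) habs4
  push_cast [-Nat.cast_sub] at habs4Q
  rw [hcast4] at habs4Q
  rw [div_eq_div_iff h2n hD']
  linear_combination ((2*(n:ℚ)-2*(q:ℚ)-1)/2) * hG - (1/2) * habs4Q

lemma Tneg (n q : ℕ) (hq : q < n) :
    ∑ k ∈ Finset.Icc (q+1) n, (4:ℚ)^(n-k)/(2*(n:ℚ)-2*(k:ℚ)+1) *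
        ((2*n-1).choose (2*k-1):ℚ) * ((2*k-1).choose (k+q):ℚ)
      = ((4*n-1).choose (2*n-2*q-1):ℚ) / (2*(n:ℚ)+2*(q:ℚ)+1) := by
  have hstep : ∀ k ∈ Finset.Icc (q+1) n,
      (4:ℚ)^(n-k)/(2*(n:ℚ)-2*(k:ℚ)+1) * ((2*n-1).choose (2*k-1):ℚ) * ((2*k-1).choose (k+q):ℚ)
      = (4:ℚ)^(n-k)/(2*(n:ℚ)-2*(k:ℚ)+1) * ((2*n-1).choose (2*k-1):ℚ) * ((2*k-1).choose (k-1-q):ℚ) := by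
    intro k hk
    rw [Finset.mem_Icc] at hk
    rw [show k+q = 2*k-1-(k-1-q) by omega, Nat.choose_symm (by omega)]
  rw [Finset.sum_congr rfl hstep, Tpos n q hq]
  have hn1 : (1:ℚ) ≤ (n:ℚ) := by exact_mod_cast (show 1 ≤ n by omega)
  have hqn : (q:ℚ) ≤ (n:ℚ) - 1 := by
    have : (q:ℚ) + 1 ≤ n := by exact_mod_cast (show q+1 ≤ n by omega)
    linarith
  have hD1 : (2*(n:ℚ)-2*(q:ℚ)-1) ≠ 0 := by
    have : (0:ℚ) < 2*(n:ℚ)-2*(q:ℚ)-1 := by linarith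
    linarith
  have hD2 : (2*(n:ℚ)+2*(q:ℚ)+1) ≠ 0 := by positivity
  have h1 := absorb (4*n-1) (2*n+2*q+1) (by omega)
  have h2 := absorb (4*n-1) (2*n-2*q-1) (by omega)
  rw [show 4*n-1+1 = 4*n by omega] at h1 h2
  rw [show (4*n).choose (2*n-2*q-1) = (4*n).choose (2*n+2*q+1) by
    rw [show 2*n-2*q-1 = 4*n-(2*n+2*q+1) by omega, Nat.choose_symm (by omega)]] at h2
  have hc1 : ((4*n - (2*n+2*q+1):ℕ):ℚ) = 2*(n:ℚ)-2*(q:ℚ)-1 := by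
    rw [Nat.cast_sub (by omega)]; push_cast; ring
  have hc2 : ((4*n - (2*n-2*q-1):ℕ):ℚ) = 2*(n:ℚ)+2*(q:ℚ)+1 := by
    rw [Nat.cast_sub (by omega), Nat.cast_sub (by omega), Nat.cast_sub (by omega)]
    push_cast; ring
  have h1Q := congrArg (Nat.cast : ℕ → ℚ) h1
  have h2Q := congrArg (Nat.cast : ℕ → ℚ) h2
  push_cast [-Nat.cast_sub] at h1Q h2Q
  rw [hc1] at h1Q
  rw [hc2] at h2Q
  rw [div_eq_div_iff hD1 hD2]
  have h4n : (4*(n:ℚ)) ≠ 0 := by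
    have : (0:ℚ) < 4*(n:ℚ) := by linarith
    linarith
  apply mul_left_cancel₀ h4n
  linear_combination (2*(n:ℚ)+2*(q:ℚ)+1) * h1Q - (2*(n:ℚ)-2*(q:ℚ)-1) * h2Q

end Helpers

/-- For all positive integers `m`, `n`:
`∑_{k=1−n}^{n} (−1)^k/(2n−2k+1) ⬝ C(k, m) ⬝ binom(4n−1, 2n+2k−1)
  = ∑_{k=1}^{n} ∑_{j=1−k}^{k} 4^(n−k)(−1)^j/(2n−2k+1) ⬝ C(j, m) ⬝ binom(2n−1, 2k−1) binom(2k−1, k−j)`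
(the outer sum over `k ≥ 1` truncates at `k = n` since `binom(2n−1, 2k−1) = 0` for `k > n`). -/
theorem genChoose_identity_odd (m n : ℕ) (hm : 0 < m) (hn : 0 < n) :
    ∑ k ∈ Finset.Icc (1 - (n : ℤ)) (n : ℤ),
      ((k.negOnePow : ℤ) : ℚ) / (2 * (n : ℚ) - 2 * (k : ℚ) + 1) * genChoose k m *
        (Nat.choose (4 * n - 1) (2 * (n : ℤ) + 2 * k - 1).toNat : ℚ)
    = ∑ k ∈ Finset.Icc 1 n, ∑ j ∈ Finset.Icc (1 - (k : ℤ)) (k : ℤ),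
        (4 : ℚ) ^ (n - k) *
          ((j.negOnePow : ℤ) : ℚ) / (2 * (n : ℚ) - 2 * (k : ℚ) + 1) * genChoose j m *
          (Nat.choose (2 * n - 1) (2 * k - 1) : ℚ) *
          (Nat.choose (2 * k - 1) ((k : ℤ) - j).toNat : ℚ) := by
  have hswap : (∑ k ∈ Finset.Icc 1 n, ∑ j ∈ Finset.Icc (1 - (k : ℤ)) (k : ℤ),
        (4 : ℚ) ^ (n - k) *
          ((j.negOnePow : ℤ) : ℚ) / (2 * (n : ℚ) - 2 * (k : ℚ) + 1) * genChoose j m *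
          (Nat.choose (2 * n - 1) (2 * k - 1) : ℚ) *
          (Nat.choose (2 * k - 1) ((k : ℤ) - j).toNat : ℚ))
      = ∑ j ∈ Finset.Icc (1 - (n : ℤ)) (n : ℤ),
          ∑ k ∈ (Finset.Icc 1 n).filter (fun (k : ℕ) => 1 - (k:ℤ) ≤ j ∧ j ≤ (k:ℤ)),
            (4 : ℚ) ^ (n - k) *
              ((j.negOnePow : ℤ) : ℚ) / (2 * (n : ℚ) - 2 * (k : ℚ) + 1) * genChoose j m *
              (Nat.choose (2 * n - 1) (2 * k - 1) : ℚ) *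
              (Nat.choose (2 * k - 1) ((k : ℤ) - j).toNat : ℚ) := by
    apply Finset.sum_comm'
    intro k j
    simp only [Finset.mem_Icc, Finset.mem_filter]
    omega
  rw [hswap]
  refine Finset.sum_congr rfl fun j hj => ?_
  rw [Finset.mem_Icc] at hj
  rcases le_or_gt 1 j with hpos | hneg
  · set q : ℕ := (j-1).toNat with hqdef
    have hjq : j = (q:ℤ)+1 := by omega
    have hq : q < n := by omega
    have hfil : (Finset.Icc 1 n).filter (fun (k : ℕ) => 1 - (k:ℤ) ≤ j ∧ j ≤ (k:ℤ))
        = Finset.Icc (q+1) n := by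
      ext k
      simp only [Finset.mem_filter, Finset.mem_Icc]
      omega
    rw [hfil]
    have hterm : ∀ k ∈ Finset.Icc (q+1) n,
        (4 : ℚ) ^ (n - k) *
          ((j.negOnePow : ℤ) : ℚ) / (2 * (n : ℚ) - 2 * (k : ℚ) + 1) * genChoose j m *
          (Nat.choose (2 * n - 1) (2 * k - 1) : ℚ) *
          (Nat.choose (2 * k - 1) ((k : ℤ) - j).toNat : ℚ)
        = ((j.negOnePow : ℤ) : ℚ) * genChoose j m *
            ((4:ℚ)^(n-k)/(2*(n:ℚ)-2*(k:ℚ)+1) *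
              ((2*n-1).choose (2*k-1):ℚ) * ((2*k-1).choose (k-1-q):ℚ)) := by
      intro k hk
      rw [Finset.mem_Icc] at hk
      rw [show ((k:ℤ)-j).toNat = k-1-q by omega]
      ring
    rw [Finset.sum_congr rfl hterm, ← Finset.mul_sum, Tpos n q hq]
    rw [show (2*(n:ℤ)+2*j-1).toNat = 2*n+2*q+1 by omega, hjq]
    push_cast
    ring
  · set q : ℕ := (-j).toNat with hqdef
    have hjq : j = -(q:ℤ) := by omega
    have hq : q < n := by omega
    have hfil : (Finset.Icc 1 n).filter (fun (k : ℕ) => 1 - (k:ℤ) ≤ j ∧ j ≤ (k:ℤ))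
        = Finset.Icc (q+1) n := by
      ext k
      simp only [Finset.mem_filter, Finset.mem_Icc]
      omega
    rw [hfil]
    have hterm : ∀ k ∈ Finset.Icc (q+1) n,
        (4 : ℚ) ^ (n - k) *
          ((j.negOnePow : ℤ) : ℚ) / (2 * (n : ℚ) - 2 * (k : ℚ) + 1) * genChoose j m *
          (Nat.choose (2 * n - 1) (2 * k - 1) : ℚ) *
          (Nat.choose (2 * k - 1) ((k : ℤ) - j).toNat : ℚ)
        = ((j.negOnePow : ℤ) : ℚ) * genChoose j m *
            ((4:ℚ)^(n-k)/(2*(n:ℚ)-2*(k:ℚ)+1) *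
              ((2*n-1).choose (2*k-1):ℚ) * ((2*k-1).choose (k+q):ℚ)) := by
      intro k hk
      rw [Finset.mem_Icc] at hk
      rw [show ((k:ℤ)-j).toNat = k+q by omega]
      ring
    rw [Finset.sum_congr rfl hterm, ← Finset.mul_sum, Tneg n q hq]
    rw [show (2*(n:ℤ)+2*j-1).toNat = 2*n-2*q-1 by omega, hjq]
    push_cast
    ring
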